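/- In the above setup, for every λ ∈ ℝ^d and every t ∈ ℕ, writing λ̄^t := (1/H)Σ_{i=1}^H λ_i^t and Δ^t := H‖λ̄^{t+1} − λ‖² − H‖λ̄^t − λ‖², it holds that ((1 − βθ)/(2β))·Δ^t ≤ (H/M)·Σ_{i=1}^H ⟨λ̄^t, g_i^t⟩ − (H/M)·Σ_{i=1}^H ⟨λ, g_i^t⟩ + (θH/2)·‖λ‖² + H³ψ²β/M² + ψ²Hβ + (1 + 1/ε³)·(4ρH + χ)·(8H³ψ²)/(M²θ), where ε := 1 − κ − 8√(ρH) and χ := (1/H)·‖Eᵀ𝟙 − 𝟙‖². -/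

import Mathlib

set_option maxHeartbeats 1600000

open scoped RealInnerProductSpace


section Helpers

variable {F : Type*} [NormedAddCommGroup F] [InnerProductSpace ℝ F]

lemma bd_cs_sum {n : ℕ} (c : Fin n → ℝ) (x : Fin n → F) :
    ‖∑ j, c j • x j‖ ≤ Real.sqrt (∑ j, (c j)^2) * Real.sqrt (∑ j, ‖x j‖^2) := by
  have h0 : ‖∑ j, c j • x j‖ ≤ ∑ j, |c j| * ‖x j‖ := by
    refine (norm_sum_le _ _).trans ?_
    refine Finset.sum_le_sum fun j _ => ?_
    rw [norm_smul, Real.norm_eq_abs]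
  have h := Finset.sum_mul_sq_le_sq_mul_sq Finset.univ (fun j => |c j|) (fun j => ‖x j‖)
  simp only [sq_abs] at h
  have h1 : (0:ℝ) ≤ ∑ j, |c j| * ‖x j‖ := by positivity
  have h2 : ∑ j, |c j| * ‖x j‖ ≤ Real.sqrt ((∑ j, (c j)^2) * ∑ j, ‖x j‖^2) := by
    calc ∑ j, |c j| * ‖x j‖ = Real.sqrt ((∑ j, |c j| * ‖x j‖)^2) := (Real.sqrt_sq h1).symm
      _ ≤ Real.sqrt ((∑ j, (c j)^2) * ∑ j, ‖x j‖^2) := Real.sqrt_le_sqrt h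
  calc ‖∑ j, c j • x j‖ ≤ ∑ j, |c j| * ‖x j‖ := h0
    _ ≤ Real.sqrt ((∑ j, (c j)^2) * ∑ j, ‖x j‖^2) := h2
    _ = _ := Real.sqrt_mul (by positivity) _

lemma bd_jensen {n : ℕ} (w : Fin n → ℝ) (hw : ∀ j, 0 ≤ w j) (hw1 : ∑ j, w j = 1)
    (x : Fin n → F) :
    ‖∑ j, w j • x j‖^2 ≤ ∑ j, w j * ‖x j‖^2 := by
  have h0 : ‖∑ j, w j • x j‖ ≤ ∑ j, w j * ‖x j‖ := by
    refine (norm_sum_le _ _).trans ?_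
    refine Finset.sum_le_sum fun j _ => ?_
    rw [norm_smul, Real.norm_eq_abs, abs_of_nonneg (hw j)]
  have h1 : (0:ℝ) ≤ ∑ j, w j * ‖x j‖ := by
    refine Finset.sum_nonneg fun j _ => mul_nonneg (hw j) (norm_nonneg _)
  have h2 : (∑ j, w j * ‖x j‖)^2 ≤ (∑ j, w j) * ∑ j, w j * ‖x j‖^2 := by
    have h := Finset.sum_mul_sq_le_sq_mul_sq Finset.univ
      (fun j => Real.sqrt (w j)) (fun j => Real.sqrt (w j) * ‖x j‖)
    have e1 : ∀ j, Real.sqrt (w j) * (Real.sqrt (w j) * ‖x j‖) = w j * ‖x j‖ := by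
      intro j; rw [← mul_assoc, Real.mul_self_sqrt (hw j)]
    have e2 : ∀ j, (Real.sqrt (w j))^2 = w j := fun j => Real.sq_sqrt (hw j)
    have e3 : ∀ j, (Real.sqrt (w j) * ‖x j‖)^2 = w j * ‖x j‖^2 := by
      intro j; rw [mul_pow, e2]
    calc (∑ j, w j * ‖x j‖)^2
        = (∑ j, Real.sqrt (w j) * (Real.sqrt (w j) * ‖x j‖))^2 := by
          congr 1; exact Finset.sum_congr rfl fun j _ => (e1 j).symm
      _ ≤ (∑ j, (Real.sqrt (w j))^2) * ∑ j, (Real.sqrt (w j) * ‖x j‖)^2 := h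
      _ = (∑ j, w j) * ∑ j, w j * ‖x j‖^2 := by
          congr 1
          · exact Finset.sum_congr rfl fun j _ => e2 j
          · exact Finset.sum_congr rfl fun j _ => e3 j
  calc ‖∑ j, w j • x j‖^2 ≤ (∑ j, w j * ‖x j‖)^2 := by
        exact pow_le_pow_left₀ (norm_nonneg _) h0 2
    _ ≤ (∑ j, w j) * ∑ j, w j * ‖x j‖^2 := h2
    _ = ∑ j, w j * ‖x j‖^2 := by rw [hw1, one_mul]

lemma bd_sq_le_of {a b c : ℝ} (ha : 0 ≤ a) (hb : 0 ≤ b) (hc : 0 ≤ c) (h : a^2 ≤ c * b^2) :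
    a ≤ Real.sqrt c * b := by
  have h1 : a = Real.sqrt (a^2) := (Real.sqrt_sq ha).symm
  rw [h1]
  calc Real.sqrt (a^2) ≤ Real.sqrt (c * b^2) := Real.sqrt_le_sqrt h
    _ = Real.sqrt c * b := by rw [Real.sqrt_mul hc, Real.sqrt_sq hb]

lemma bd_variance {n : ℕ} (x : Fin n → F) (c : F) (hc : ∑ i, x i = (n:ℝ) • c) :
    ∑ j, ‖x j - c‖^2 ≤ ∑ j, ‖x j‖^2 := by
  have key : ∑ j, ‖x j - c‖^2
      = (∑ j, ‖x j‖^2) - 2 * (∑ j, ⟪x j, c⟫) + (n:ℝ) * ‖c‖^2 := by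
    rw [Finset.sum_congr rfl fun j (_ : j ∈ Finset.univ) => norm_sub_sq_real (x j) c]
    rw [Finset.sum_add_distrib, Finset.sum_sub_distrib, ← Finset.mul_sum,
      Finset.sum_const, Finset.card_univ, Fintype.card_fin, nsmul_eq_mul]
  have hin : ∑ j, ⟪x j, c⟫ = (n:ℝ) * ‖c‖^2 := by
    rw [← sum_inner, hc, real_inner_smul_left, real_inner_self_eq_norm_sq]
  rw [key, hin]
  nlinarith [norm_nonneg c, sq_nonneg ‖c‖, Nat.cast_nonneg (α := ℝ) n]

end Helpers


lemma bd_opnorm {d n : ℕ} (A : Matrix (Fin n) (Fin n) ℝ) (y : Fin n → EuclideanSpace ℝ (Fin d)) :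
    ∑ i, ‖∑ j, A i j • y j‖^2
      ≤ ‖LinearMap.toContinuousLinearMap (Matrix.toEuclideanLin A)‖^2 * ∑ j, ‖y j‖^2 := by
  set T := LinearMap.toContinuousLinearMap (Matrix.toEuclideanLin A) with hTdef
  have hnorm : ∀ {m : ℕ} (v : EuclideanSpace ℝ (Fin m)), ‖v‖^2 = ∑ k, (v k)^2 := by
    intro m v
    rw [PiLp.norm_sq_eq_of_L2]
    simp [Real.norm_eq_abs, sq_abs]
  have hTapp : ∀ (z : EuclideanSpace ℝ (Fin n)) (i : Fin n), T z i = ∑ j, A i j * z j := by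
    intro z i
    show Matrix.toEuclideanLin A z i = _
    rfl
  have hT : ∀ z : EuclideanSpace ℝ (Fin n), ∑ i, (∑ j, A i j * z j)^2 ≤ ‖T‖^2 * ∑ j, (z j)^2 := by
    intro z
    have h1 : ‖T z‖ ≤ ‖T‖ * ‖z‖ := T.le_opNorm z
    have h2 : ‖T z‖^2 ≤ ‖T‖^2 * ‖z‖^2 := by
      nlinarith [norm_nonneg (T z), norm_nonneg z, T.opNorm_nonneg]
    rw [hnorm (T z), hnorm z] at h2
    calc ∑ i, (∑ j, A i j * z j)^2 = ∑ i, (T z i)^2 := by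
          refine Finset.sum_congr rfl fun i _ => ?_
          rw [hTapp]
      _ ≤ ‖T‖^2 * ∑ j, (z j)^2 := h2
  have happ : ∀ (i : Fin n) (k : Fin d), (∑ j, A i j • y j) k = ∑ j, A i j * (y j k) := by
    intro i k
    classical
    induction (Finset.univ : Finset (Fin n)) using Finset.induction_on with
    | empty => simp [PiLp.zero_apply]
    | insert _ _ hx ih =>
        rw [Finset.sum_insert hx, Finset.sum_insert hx, PiLp.add_apply, PiLp.smul_apply, ih]
        simp [smul_eq_mul]
  calc ∑ i, ‖∑ j, A i j • y j‖^2
      = ∑ i, ∑ k, (∑ j, A i j * (y j k))^2 := by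
        refine Finset.sum_congr rfl fun i _ => ?_
        rw [hnorm]
        exact Finset.sum_congr rfl fun k _ => by rw [happ]
    _ = ∑ k, ∑ i, (∑ j, A i j * (y j k))^2 := Finset.sum_comm
    _ ≤ ∑ k : Fin d, (‖T‖^2 * ∑ j, (y j k)^2) := by
        refine Finset.sum_le_sum fun k _ => ?_
        exact hT ((WithLp.equiv 2 (Fin n → ℝ)).symm (fun j => y j k))
    _ = ‖T‖^2 * ∑ j, ‖y j‖^2 := by
        rw [← Finset.mul_sum, Finset.sum_comm]
        congr 1
        exact Finset.sum_congr rfl fun j _ => (hnorm (y j)).symm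


section CoreL
variable {F : Type*} [NormedAddCommGroup F] [InnerProductSpace ℝ F]

lemma bd_young (x y : F) {τ : ℝ} (hτ : 0 < τ) :
    ‖x + y‖^2 ≤ (1+τ)*‖x‖^2 + (1+1/τ)*‖y‖^2 := by
  rw [norm_add_sq_real]
  have h2 : ⟪x, y⟫ ≤ ‖x‖*‖y‖ := real_inner_le_norm x y
  have h5 : (1+1/τ)*‖y‖^2 = ‖y‖^2 + ‖y‖^2/τ := by field_simp
  have h6 : 2*(‖x‖*‖y‖) - τ*‖x‖^2 ≤ ‖y‖^2/τ := by
    rw [le_div_iff₀ hτ]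
    linarith only [sq_nonneg (τ*‖x‖ - ‖y‖)]
  linarith only [h2, h5, h6]

lemma bd_core (β θ ψp : ℝ) (hβ : 0 < β) (hθ : 0 < θ) (hψp : 0 ≤ ψp)
    (hβθ1 : β*θ < 1) (hβθ0 : 0 < β*θ)
    (a Gp lamv : F) (ha : θ*‖a‖ ≤ ψp) (hG : ‖Gp‖ ≤ ψp) :
    (1+(1-β*θ)) * ‖(1-β*θ)•a + β•Gp - lamv‖^2 - 2*(1-β*θ)*‖a - lamv‖^2
      - 4*β*⟪a - lamv, Gp⟫ - 2*(β*θ)*‖lamv‖^2 ≤ 8*β^2*ψp^2 := by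
  obtain ⟨q, hqdef⟩ : ∃ q' : ℝ, q' = 1 - β*θ := ⟨_, rfl⟩
  rw [show (1 - β*θ) = q from hqdef.symm]
  have hq0 : 0 < q := by rw [hqdef]; linarith
  have hq1 : q < 1 := by rw [hqdef]; linarith
  have hβθq : β*θ = 1 - q := by rw [hqdef]; ring
  -- vector expansions, raw
  have hPexp : ‖q•a + β•Gp - lamv‖^2
      = q^2*‖a‖^2 + 2*q*β*⟪a,Gp⟫ + β^2*‖Gp‖^2
        - 2*(q*⟪a,lamv⟫ + β*⟪lamv,Gp⟫) + ‖lamv‖^2 := by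
    rw [norm_sub_sq_real (q•a + β•Gp) lamv, norm_add_sq_real (q•a) (β•Gp)]
    rw [inner_add_left, real_inner_smul_left, real_inner_smul_left,
      real_inner_smul_left, real_inner_smul_right, norm_smul, norm_smul]
    rw [Real.norm_eq_abs, Real.norm_eq_abs, mul_pow, mul_pow, sq_abs, sq_abs]
    rw [real_inner_comm Gp lamv]
    ring
  have huexp : ‖a - lamv‖^2 = ‖a‖^2 - 2*⟪a,lamv⟫ + ‖lamv‖^2 := by
    rw [norm_sub_sq_real]
  have hugexp : ⟪a - lamv, Gp⟫ = ⟪a,Gp⟫ - ⟪lamv,Gp⟫ := by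
    rw [inner_sub_left]
  have hnhexp : ‖(q*θ)•lamv - (2 - q - q^2)•Gp‖^2
      = (q*θ)^2*‖lamv‖^2 - 2*(q*θ)*(2 - q - q^2)*⟪lamv,Gp⟫
        + (2-q-q^2)^2*‖Gp‖^2 := by
    rw [norm_sub_sq_real, real_inner_smul_left, real_inner_smul_right,
      norm_smul, norm_smul, Real.norm_eq_abs, Real.norm_eq_abs, mul_pow, mul_pow,
      sq_abs, sq_abs]
    ring
  have hcs : q*θ*⟪a,lamv⟫ - (2-q-q^2)*⟪a,Gp⟫
      ≤ ‖a‖ * ‖(q*θ)•lamv - (2 - q - q^2)•Gp‖ := by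
    have hinner : ⟪a, (q*θ)•lamv - (2 - q - q^2)•Gp⟫
        = q*θ*⟪a,lamv⟫ - (2-q-q^2)*⟪a,Gp⟫ := by
      rw [inner_sub_right, real_inner_smul_right, real_inner_smul_right]
    rw [← hinner]
    exact real_inner_le_norm _ _
  -- scalarize
  obtain ⟨A, hAdef⟩ : ∃ r : ℝ, r = ‖a‖ := ⟨_, rfl⟩
  obtain ⟨L, hLdef⟩ : ∃ r : ℝ, r = ‖lamv‖ := ⟨_, rfl⟩
  obtain ⟨G1, hG1def⟩ : ∃ r : ℝ, r = ‖Gp‖ := ⟨_, rfl⟩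
  obtain ⟨p, hpdef⟩ : ∃ r : ℝ, r = ⟪a, lamv⟫ := ⟨_, rfl⟩
  obtain ⟨w, hwdef⟩ : ∃ r : ℝ, r = ⟪a, Gp⟫ := ⟨_, rfl⟩
  obtain ⟨x, hxdef⟩ : ∃ r : ℝ, r = ⟪lamv, Gp⟫ := ⟨_, rfl⟩
  obtain ⟨nh, hnhdef⟩ : ∃ r : ℝ, r = ‖(q*θ)•lamv - (2 - q - q^2)•Gp‖ := ⟨_, rfl⟩
  rw [hPexp, huexp, hugexp]
  rw [← hAdef, ← hLdef, ← hG1def, ← hpdef, ← hwdef, ← hxdef]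
  rw [← hAdef] at ha
  rw [← hG1def] at hG
  rw [← hLdef, ← hG1def, ← hxdef, ← hnhdef] at hnhexp
  rw [← hAdef, ← hpdef, ← hwdef, ← hnhdef] at hcs
  have hA0 : 0 ≤ A := hAdef ▸ norm_nonneg a
  have hL0 : 0 ≤ L := hLdef ▸ norm_nonneg lamv
  have hG10 : 0 ≤ G1 := hG1def ▸ norm_nonneg Gp
  have hnh0 : 0 ≤ nh := hnhdef ▸ norm_nonneg _
  have hpAL : |p| ≤ A*L := by rw [hpdef, hAdef, hLdef]; exact abs_real_inner_le_norm a lamv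
  have hwAG : |w| ≤ A*G1 := by rw [hwdef, hAdef, hG1def]; exact abs_real_inner_le_norm a Gp
  have hxLG : |x| ≤ L*G1 := by rw [hxdef, hLdef, hG1def]; exact abs_real_inner_le_norm lamv Gp
  have hπ20 : 0 < 2 - q - q^2 := by
    have h := mul_pos (show (0:ℝ) < 1 - q by linarith) (show (0:ℝ) < 2 + q by linarith)
    linarith only [h]
  have c1 : (1+q) * (q^2*A^2 + 2*q*β*w + β^2*G1^2 - 2*(q*p + β*x) + L^2)
      - 2*q*(A^2 - 2*p + L^2) - 4*β*(w - x) - 2*(β*θ)*L^2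
      = -(q*(2 - q - q^2))*A^2 + 2*β*(q*θ*p - (2 - q - q^2)*w)
        + 2*β^2*θ*x - (β*θ)*L^2 + (1+q)*β^2*G1^2 := by
    linear_combination (-(2*q*p + 2*β*x + L^2)) * hβθq
  rw [c1]
  rcases le_or_gt (1/4 : ℝ) q with hc | hc
  · -- CASE q ≥ 1/4 : complete the square in `a`
    have hcs' : 2*β*(q*θ*p - (2-q-q^2)*w) ≤ 2*β*(A*nh) :=
      mul_le_mul_of_nonneg_left hcs (by positivity)
    have hqπ : (0:ℝ) < q*(2-q-q^2) := by positivity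
    have c4 : -(q*(2 - q - q^2))*A^2 + 2*β*(A*nh) ≤ β^2*nh^2/(q*(2-q-q^2)) := by
      rw [le_div_iff₀ hqπ]
      linarith only [sq_nonneg (q*(2-q-q^2)*A - β*nh)]
    have hβqθ : β*q*θ ≤ 2 - q - q^2 := by
      have e : β*q*θ = q - q^2 := by linear_combination q * hβθq
      rw [e]; linarith
    have hG1q : G1^2 ≤ 4*q*ψp^2 := by
      have t : 0 ≤ (ψp - G1)*(ψp + G1) := mul_nonneg (by linarith) (by linarith)
      have t2 : 0 ≤ (4*q - 1)*ψp^2 := mul_nonneg (by linarith) (sq_nonneg _)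
      linarith only [t, t2]
    have c7 : β^2*nh^2/(q*(2-q-q^2)) + 2*β^2*θ*x - (β*θ)*L^2 + (1+q)*β^2*G1^2
        ≤ 8*β^2*ψp^2 := by
      have hmul : (q*(2-q-q^2)) * (β^2*nh^2/(q*(2-q-q^2)) + 2*β^2*θ*x - (β*θ)*L^2 + (1+q)*β^2*G1^2)
          ≤ (q*(2-q-q^2)) * (8*β^2*ψp^2) := by
        have e : (q*(2-q-q^2)) * (β^2*nh^2/(q*(2-q-q^2)) + 2*β^2*θ*x - (β*θ)*L^2 + (1+q)*β^2*G1^2)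
            = β^2*nh^2 + (q*(2-q-q^2))*(2*β^2*θ*x - (β*θ)*L^2 + (1+q)*β^2*G1^2) := by
          field_simp
          ring
        rw [e, hnhexp]
        have t1 : 0 ≤ ((2-q-q^2) - β*q*θ) * (β*q*θ*L^2) := by
          apply mul_nonneg (by linarith)
          positivity
        have t2 : 0 ≤ (4*q*ψp^2 - G1^2) * (2*(2-q-q^2)*β^2) := by
          apply mul_nonneg (by linarith)
          positivity
        linarith only [t1, t2]
      exact le_of_mul_le_mul_left hmul hqπ
    linarith only [c4, hcs', c7]
  · -- CASE q < 1/4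
    have h34 : 3/4 ≤ β*θ := by rw [hβθq]; linarith
    have hp' : p ≤ A*L := le_trans (le_abs_self p) hpAL
    have hw' : -(A*G1) ≤ w := by linarith [abs_le.mp hwAG |>.1]
    have hx' : x ≤ L*G1 := le_trans (le_abs_self x) hxLG
    have t1 : 0 ≤ 2*β*(q*θ*(A*L - p)) := by
      apply mul_nonneg (by positivity)
      apply mul_nonneg (by positivity)
      linarith
    have t2 : 0 ≤ 2*β*((2-q-q^2)*(A*G1 + w)) := by
      apply mul_nonneg (by positivity)
      apply mul_nonneg (by positivity)
      linarith
    have t3 : 0 ≤ 2*β^2*θ*(L*G1 - x) := by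
      apply mul_nonneg (by positivity); linarith
    have t4 : 0 ≤ q*(2-q-q^2)*A^2 := by positivity
    have d0 : -(q*(2 - q - q^2))*A^2 + 2*β*(q*θ*p - (2 - q - q^2)*w)
        + 2*β^2*θ*x - (β*θ)*L^2 + (1+q)*β^2*G1^2
        ≤ 2*β*(q*θ*(A*L)) + 2*β*((2-q-q^2)*(A*G1)) + 2*β^2*θ*(L*G1)
          - (β*θ)*L^2 + (1+q)*β^2*G1^2 := by linarith only [t1, t2, t3, t4]
    have hfin : θ * (2*β*(q*θ*(A*L)) + 2*β*((2-q-q^2)*(A*G1)) + 2*β^2*θ*(L*G1)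
          - (β*θ)*L^2 + (1+q)*β^2*G1^2)
        ≤ θ * (8*β^2*ψp^2) := by
      have u1 : 2*β*q*((θ*A)*(θ*L)) ≤ 2*β*q*(ψp*(θ*L)) := by
        apply mul_le_mul_of_nonneg_left _ (by positivity)
        apply mul_le_mul_of_nonneg_right ha (by positivity)
      have u2 : 2*β*(2-q-q^2)*((θ*A)*G1) ≤ 2*β*(2-q-q^2)*(ψp*ψp) := by
        apply mul_le_mul_of_nonneg_left _ (by positivity)
        calc (θ*A)*G1 ≤ ψp*G1 := mul_le_mul_of_nonneg_right ha hG10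
          _ ≤ ψp*ψp := mul_le_mul_of_nonneg_left hG hψp
      have u3 : 2*β^2*θ*((θ*L)*G1) ≤ 2*β^2*θ*((θ*L)*ψp) := by
        apply mul_le_mul_of_nonneg_left _ (by positivity)
        exact mul_le_mul_of_nonneg_left hG (by positivity)
      have u4 : θ*((1+q)*β^2)*G1^2 ≤ θ*((1+q)*β^2)*ψp^2 := by
        apply mul_le_mul_of_nonneg_left _ (by positivity)
        have t : 0 ≤ (ψp - G1)*(ψp + G1) := mul_nonneg (by linarith) (by linarith)
        linarith only [t]
      have u5 : 0 ≤ β*((θ*L) - ψp)^2 := by positivity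
      have u7 : 2*β*q*(ψp*(θ*L)) + 2*β^2*θ*((θ*L)*ψp) = 2*β*(ψp*(θ*L)) := by
        linear_combination (2*β*(ψp*(θ*L))) * hβθq
      have u8 : 0 ≤ (q + q^2)*(β*ψp^2) := by positivity
      have u6 : 3*(β*ψp^2) ≤ 4*(β*θ)*(β*ψp^2) := by
        have t : 0 ≤ (4*(β*θ) - 3)*(β*ψp^2) := by
          apply mul_nonneg (by linarith)
          positivity
        linarith only [t]
      have u9 : 0 ≤ (1/4 - q)*(θ*β^2*ψp^2) := by
        apply mul_nonneg (by linarith)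
        positivity
      have u10 : 0 ≤ θ*β^2*ψp^2 := by positivity
      have u11 : 0 ≤ β*ψp^2 := by positivity
      linarith only [u1, u2, u3, u4, u5, u6, u7, u8, u9, u10, u11]
    have hthm := le_of_mul_le_mul_left hfin hθ
    linarith only [hthm, d0]

end CoreL

/-- **Descent-type inequality for the averaged dual iterates of the
Byzantine-resilient Algorithm 2 (Lemma 5).** -/
theorem byzantine_dual_descent_inequality
    (d H M : ℕ) (hH : 1 ≤ H) (hHM : H ≤ M)
    (β θ : ℝ) (hβ : 0 < β) (hθ : 0 < θ)
    (hβθ0 : 0 < β * θ) (hβθ : β * θ < 1)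
    (ψ : ℝ) (hψ : 0 ≤ ψ)
    (Emat : Matrix (Fin H) (Fin H) ℝ)
    (hEnn : ∀ i j, 0 ≤ Emat i j)
    (hErow : ∀ i, ∑ j, Emat i j = 1)
    (κ : ℝ)
    (hκ : κ = ‖LinearMap.toContinuousLinearMap
        (Matrix.toEuclideanLin
          (Emat - Matrix.of fun _ j => (H : ℝ)⁻¹ * ∑ k, Emat k j))‖ ^ 2)
    (ρ : ℝ) (hρ : 0 ≤ ρ) (hρκ : 8 * Real.sqrt (ρ * H) < 1 - κ)
    (ε : ℝ) (hε : ε = 1 - κ - 8 * Real.sqrt (ρ * H))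
    (χ : ℝ) (hχ : χ = (H : ℝ)⁻¹ * ∑ j, (∑ i, Emat i j - 1) ^ 2)
    (g : Fin H → ℕ → EuclideanSpace ℝ (Fin d))
    (hg : ∀ i t, ‖g i t‖ ≤ ψ)
    (lam lamhalf : Fin H → ℕ → EuclideanSpace ℝ (Fin d))
    (hlam0 : ∀ i, lam i 0 = 0)
    (hlamhalf : ∀ i t,
      lamhalf i t = (1 - β * θ) • lam i t + (β * ((H : ℝ) / M)) • g i t)
    (hProp1 : ∀ i t,
      ‖lam i (t + 1) - ∑ j, Emat i j • lamhalf j t‖ ^ 2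
        ≤ ρ * ∑ j, Emat i j
            * ‖lamhalf j t - ∑ k, Emat i k • lamhalf k t‖ ^ 2)
    (hProp2 : ∀ i t,
      ‖lam i (t + 1)‖
        ≤ sSup {r : ℝ | ∃ j, 0 < Emat i j ∧ r = ‖lamhalf j t‖}) :
    ∀ (lamv : EuclideanSpace ℝ (Fin d)) (t : ℕ),
      ((1 - β * θ) / (2 * β))
          * ((H : ℝ) * ‖(H : ℝ)⁻¹ • (∑ i, lam i (t + 1)) - lamv‖ ^ 2
            - (H : ℝ) * ‖(H : ℝ)⁻¹ • (∑ i, lam i t) - lamv‖ ^ 2)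
        ≤ ((H : ℝ) / M) * ∑ i, ⟪(H : ℝ)⁻¹ • ∑ j, lam j t, g i t⟫
          - ((H : ℝ) / M) * ∑ i, ⟪lamv, g i t⟫
          + (θ * (H : ℝ) / 2) * ‖lamv‖ ^ 2
          + (H : ℝ) ^ 3 * ψ ^ 2 * β / (M : ℝ) ^ 2
          + ψ ^ 2 * (H : ℝ) * β
          + (1 + 1 / ε ^ 3) * (4 * ρ * (H : ℝ) + χ)
              * (8 * (H : ℝ) ^ 3 * ψ ^ 2) / ((M : ℝ) ^ 2 * θ) := by
  classical
  intro lamv t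
  -- basic numerics
  have hH0 : (0:ℝ) < H := by exact_mod_cast Nat.lt_of_lt_of_le Nat.zero_lt_one hH
  have hM0 : (0:ℝ) < M := by
    have : (0:ℕ) < M := lt_of_lt_of_le (Nat.lt_of_lt_of_le Nat.zero_lt_one hH) hHM
    exact_mod_cast this
  have hHM' : (H:ℝ) ≤ M := by exact_mod_cast hHM
  have hH1 : (1:ℝ) ≤ H := by exact_mod_cast hH
  have hq0 : 0 < 1 - β*θ := by linarith
  have hq1 : 1 - β*θ < 1 := by linarith
  have hκ0 : 0 ≤ κ := hκ ▸ sq_nonneg _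
  have hsqrtρH : 0 ≤ Real.sqrt (ρ * H) := Real.sqrt_nonneg _
  have hε0 : 0 < ε := by rw [hε]; linarith
  have hε1 : ε ≤ 1 := by rw [hε]; linarith
  have hχ0 : 0 ≤ χ := by
    rw [hχ]; positivity
  set B : ℝ := H*ψ/(M*θ) with hBdef
  have hB0 : 0 ≤ B := by positivity
  -- Step 1 : uniform norm bound on the iterates
  have hhalfB : ∀ s i, (∀ j, ‖lam j s‖ ≤ B) → ‖lamhalf i s‖ ≤ B := by
    intro s i h
    rw [hlamhalf]
    calc ‖(1 - β * θ) • lam i s + (β * ((H : ℝ) / M)) • g i s‖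
        ≤ ‖(1 - β * θ) • lam i s‖ + ‖(β * ((H : ℝ) / M)) • g i s‖ := norm_add_le _ _
      _ ≤ (1 - β*θ) * B + (β * (H / M)) * ψ := by
          gcongr ?_ + ?_
          · rw [norm_smul, Real.norm_eq_abs, abs_of_pos hq0]
            exact mul_le_mul_of_nonneg_left (h i) (le_of_lt hq0)
          · rw [norm_smul, Real.norm_eq_abs, abs_of_pos (by positivity)]
            exact mul_le_mul_of_nonneg_left (hg i s) (by positivity)
      _ = B := by
          rw [hBdef]; field_simp; ring
  have hlamB : ∀ s i, ‖lam i s‖ ≤ B := by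
    intro s
    induction s with
    | zero => intro i; rw [hlam0]; simpa using hB0
    | succ n ih =>
        intro i
        refine (hProp2 i n).trans (Real.sSup_le ?_ hB0)
        rintro r ⟨j, hj, rfl⟩
        exact hhalfB n j ih
  have hhalfB' : ∀ s i, ‖lamhalf i s‖ ≤ B := fun s i => hhalfB s i (hlamB s)
  have hHne : (H:ℝ) ≠ 0 := ne_of_gt hH0
  -- abbreviations
  set avg : ℕ → EuclideanSpace ℝ (Fin d) := fun s => (H:ℝ)⁻¹ • ∑ i, lam i s with havgdef
  set Gs : ℕ → EuclideanSpace ℝ (Fin d) := fun s => ∑ i, g i s with hGsdef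
  set avgh : ℕ → EuclideanSpace ℝ (Fin d) := fun s => (H:ℝ)⁻¹ • ∑ i, lamhalf i s with havghdef
  have havgh : ∀ s, avgh s = (1 - β*θ) • avg s + (β/M) • Gs s := by
    intro s
    have hsum : ∑ i, lamhalf i s
        = (1-β*θ) • ∑ i, lam i s + (β*((H:ℝ)/M)) • ∑ i, g i s := by
      rw [Finset.sum_congr rfl fun i _ => hlamhalf i s, Finset.sum_add_distrib,
        ← Finset.smul_sum, ← Finset.smul_sum]
    show (H:ℝ)⁻¹ • ∑ i, lamhalf i s = _
    rw [hsum, smul_add, smul_smul, smul_smul]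
    congr 1
    · rw [mul_comm, ← smul_smul]
    · have : (H:ℝ)⁻¹ * (β*((H:ℝ)/M)) = β / M := by field_simp
      rw [this]
  -- the ℓ² product space
  have hWnorm : ∀ f : Fin H → EuclideanSpace ℝ (Fin d),
      ‖(WithLp.equiv 2 (∀ _ : Fin H, EuclideanSpace ℝ (Fin d))).symm f‖^2 = ∑ i, ‖f i‖^2 := by
    intro f
    rw [PiLp.norm_sq_eq_of_L2]
    exact Finset.sum_congr rfl fun i _ => by rfl
  set mk : (Fin H → EuclideanSpace ℝ (Fin d)) → PiLp 2 (fun _ : Fin H => EuclideanSpace ℝ (Fin d)) :=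
    fun f => (WithLp.equiv 2 (∀ _ : Fin H, EuclideanSpace ℝ (Fin d))).symm f with hmkdef
  set Fm : ℕ → PiLp 2 (fun _ : Fin H => EuclideanSpace ℝ (Fin d)) :=
    fun s => mk (fun i => lam i s - avg s) with hFmdef
  set Fh : ℕ → PiLp 2 (fun _ : Fin H => EuclideanSpace ℝ (Fin d)) :=
    fun s => mk (fun i => lamhalf i s - avgh s) with hFhdef
  set X : ℝ := β * H / M * (Real.sqrt H * ψ) with hXdef
  have hX0 : 0 ≤ X := by positivity
  have hFh_le : ∀ s, ‖Fh s‖ ≤ (1-β*θ) * ‖Fm s‖ + X := by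
    intro s
    have hdecomp : Fh s = (1-β*θ) • Fm s + (β*(H:ℝ)/M) • mk (fun i => g i s - (H:ℝ)⁻¹ • Gs s) := by
      show mk _ = _
      have : ((1-β*θ) • Fm s + (β*(H:ℝ)/M) • mk (fun i => g i s - (H:ℝ)⁻¹ • Gs s))
          = mk (fun i => (1-β*θ) • (lam i s - avg s) + (β*(H:ℝ)/M) • (g i s - (H:ℝ)⁻¹ • Gs s)) := rfl
      rw [this]
      apply congrArg mk
      funext i
      rw [hlamhalf i s, havgh s]
      have h1 : (β*((H:ℝ)/M)) = β*(H:ℝ)/M := by ring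
      rw [h1]
      have h2 : (β*(H:ℝ)/M) • ((H:ℝ)⁻¹ • Gs s) = (β/M) • Gs s := by
        rw [smul_smul]
        congr 1
        field_simp
      rw [smul_sub, smul_sub, h2]
      abel
    have hGdev : ‖mk (fun i => g i s - (H:ℝ)⁻¹ • Gs s)‖ ≤ Real.sqrt H * ψ := by
      have hvar : ∑ i, ‖g i s - (H:ℝ)⁻¹ • Gs s‖^2 ≤ ∑ i : Fin H, ψ^2 := by
        refine (bd_variance (fun i => g i s) ((H:ℝ)⁻¹ • Gs s) ?_).trans ?_
        · rw [smul_smul, mul_inv_cancel₀ hHne, one_smul]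
        · exact Finset.sum_le_sum fun i _ => by
            have := hg i s
            nlinarith [norm_nonneg (g i s)]
      have hsq : ‖mk (fun i => g i s - (H:ℝ)⁻¹ • Gs s)‖^2 ≤ (H:ℝ) * ψ^2 := by
        rw [hWnorm]
        simpa [Finset.sum_const, Finset.card_univ, nsmul_eq_mul] using hvar
      exact bd_sq_le_of (norm_nonneg _) hψ (le_of_lt hH0) hsq
    calc ‖Fh s‖ ≤ ‖(1-β*θ) • Fm s‖ + ‖(β*(H:ℝ)/M) • mk (fun i => g i s - (H:ℝ)⁻¹ • Gs s)‖ := by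
          rw [hdecomp]; exact norm_add_le _ _
      _ ≤ (1-β*θ) * ‖Fm s‖ + X := by
          gcongr ?_ + ?_
          · rw [norm_smul, Real.norm_eq_abs, abs_of_pos hq0]
          · rw [norm_smul, Real.norm_eq_abs, abs_of_pos (by positivity), hXdef]
            calc (β*(H:ℝ)/M) * ‖mk (fun i => g i s - (H:ℝ)⁻¹ • Gs s)‖
                ≤ (β*(H:ℝ)/M) * (Real.sqrt H * ψ) := by
                  exact mul_le_mul_of_nonneg_left hGdev (by positivity)
              _ = β * (H:ℝ) / M * (Real.sqrt H * ψ) := rfl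
  -- column sum facts
  have hEle1 : ∀ i j, Emat i j ≤ 1 := by
    intro i j
    calc Emat i j ≤ ∑ j', Emat i j' :=
          Finset.single_le_sum (fun j' _ => hEnn i j') (Finset.mem_univ j)
      _ = 1 := hErow i
  have hcol_tot : ∑ j, ∑ i, Emat i j = (H:ℝ) := by
    rw [Finset.sum_comm]
    simp [hErow]
  have hcol_le : ∀ j, ∑ i, Emat i j ≤ (H:ℝ) := by
    intro j
    calc ∑ i, Emat i j ≤ ∑ _i : Fin H, (1:ℝ) := Finset.sum_le_sum fun i _ => hEle1 i j
      _ = H := by simp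
  obtain ⟨Amat, hAmatdef⟩ : ∃ Amat : Matrix (Fin H) (Fin H) ℝ,
      Amat = Emat - Matrix.of fun _ j => (H : ℝ)⁻¹ * ∑ k, Emat k j := ⟨_, rfl⟩
  rw [← hAmatdef] at hκ
  have hAmat_apply : ∀ i j, Amat i j = Emat i j - (H:ℝ)⁻¹ * ∑ k, Emat k j := by
    intro i j
    rw [hAmatdef]
    simp [Matrix.sub_apply]
  -- mixing objects
  set mm : ℕ → Fin H → EuclideanSpace ℝ (Fin d) :=
    fun s i => ∑ j, Emat i j • lamhalf j s with hmmdef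
  set dd : ℕ → Fin H → EuclideanSpace ℝ (Fin d) :=
    fun s i => lam i (s+1) - mm s i with hdddef
  have hmm_apply : ∀ s i, mm s i = ∑ j, Emat i j • lamhalf j s := fun s i => rfl
  have hdd_apply : ∀ s i, dd s i = lam i (s+1) - mm s i := fun s i => rfl
  have hmmsum : ∀ s, ∑ i, mm s i = ∑ j, (∑ i, Emat i j) • lamhalf j s := by
    intro s
    calc ∑ i, mm s i = ∑ i, ∑ j, Emat i j • lamhalf j s :=
          Finset.sum_congr rfl fun i _ => hmm_apply s i
      _ = ∑ j, ∑ i, Emat i j • lamhalf j s := Finset.sum_comm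
      _ = ∑ j, (∑ i, Emat i j) • lamhalf j s :=
          Finset.sum_congr rfl fun j _ => (Finset.sum_smul).symm
  have hFhnorm : ∀ s, ‖Fh s‖^2 = ∑ j, ‖lamhalf j s - avgh s‖^2 := fun s => hWnorm _
  have hFmnorm : ∀ s, ‖Fm s‖^2 = ∑ j, ‖lam j s - avg s‖^2 := fun s => hWnorm _
  -- bound on the aggregation errors
  have hddsq : ∀ s, ∑ i, ‖dd s i‖^2 ≤ 4*(ρ*(H:ℝ)) * ‖Fh s‖^2 := by
    intro s
    have hmavg : ∀ i, mm s i - avgh s = ∑ j, Emat i j • (lamhalf j s - avgh s) := by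
      intro i
      rw [hmm_apply]
      rw [Finset.sum_congr rfl fun j (_ : j ∈ Finset.univ) =>
        smul_sub (Emat i j) (lamhalf j s) (avgh s)]
      rw [Finset.sum_sub_distrib, ← Finset.sum_smul, hErow i, one_smul]
    have hjensen : ∀ i, ‖mm s i - avgh s‖^2 ≤ ∑ j, Emat i j * ‖lamhalf j s - avgh s‖^2 := by
      intro i
      rw [hmavg i]
      have := bd_jensen (fun j => Emat i j) (hEnn i) (hErow i)
        (fun j => lamhalf j s - avgh s)
      simpa using this
    have hterm : ∀ i j, ‖lamhalf j s - mm s i‖^2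
        ≤ 2*‖lamhalf j s - avgh s‖^2 + 2*‖mm s i - avgh s‖^2 := by
      intro i j
      have hid : lamhalf j s - mm s i = (lamhalf j s - avgh s) - (mm s i - avgh s) := by abel
      rw [hid]
      have h1 := norm_sub_le (lamhalf j s - avgh s) (mm s i - avgh s)
      have h2 := sq_nonneg (‖lamhalf j s - avgh s‖ - ‖mm s i - avgh s‖)
      have h3 : ‖(lamhalf j s - avgh s) - (mm s i - avgh s)‖^2
          ≤ (‖lamhalf j s - avgh s‖ + ‖mm s i - avgh s‖)^2 :=
        pow_le_pow_left₀ (norm_nonneg _) h1 2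
      nlinarith [h3, h2]
    have hper : ∀ i, ‖dd s i‖^2 ≤ ρ * (4 * ∑ j, Emat i j * ‖lamhalf j s - avgh s‖^2) := by
      intro i
      have h0 : ‖dd s i‖^2 ≤ ρ * ∑ j, Emat i j * ‖lamhalf j s - mm s i‖^2 := by
        rw [hdd_apply, hmm_apply]
        have h := hProp1 i s
        calc ‖lam i (s+1) - ∑ j, Emat i j • lamhalf j s‖^2
            ≤ ρ * ∑ j, Emat i j * ‖lamhalf j s - ∑ k, Emat i k • lamhalf k s‖^2 := h
          _ = ρ * ∑ j, Emat i j * ‖lamhalf j s - mm s i‖^2 := by rw [hmm_apply]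
      refine h0.trans ?_
      apply mul_le_mul_of_nonneg_left _ hρ
      have step1 : ∑ j, Emat i j * ‖lamhalf j s - mm s i‖^2
          ≤ ∑ j, Emat i j * (2*‖lamhalf j s - avgh s‖^2 + 2*‖mm s i - avgh s‖^2) := by
        refine Finset.sum_le_sum fun j _ => ?_
        exact mul_le_mul_of_nonneg_left (hterm i j) (hEnn i j)
      refine step1.trans ?_
      have step2 : ∑ j, Emat i j * (2*‖lamhalf j s - avgh s‖^2 + 2*‖mm s i - avgh s‖^2)
          = 2 * (∑ j, Emat i j * ‖lamhalf j s - avgh s‖^2) + 2*‖mm s i - avgh s‖^2 := by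
        rw [Finset.sum_congr rfl fun j (_ : j ∈ Finset.univ) => mul_add (Emat i j) _ _]
        rw [Finset.sum_add_distrib]
        congr 1
        · rw [Finset.sum_congr rfl fun j (_ : j ∈ Finset.univ) =>
            (by ring : Emat i j * (2*‖lamhalf j s - avgh s‖^2)
              = 2 * (Emat i j * ‖lamhalf j s - avgh s‖^2))]
          rw [← Finset.mul_sum]
        · rw [Finset.sum_congr rfl fun j (_ : j ∈ Finset.univ) =>
            (by ring : Emat i j * (2*‖mm s i - avgh s‖^2)
              = (2*‖mm s i - avgh s‖^2) * Emat i j)]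
          rw [← Finset.mul_sum, hErow i, mul_one, mul_comm]
      rw [step2]
      have := hjensen i
      linarith [this]
    calc ∑ i, ‖dd s i‖^2
        ≤ ∑ i, ρ * (4 * ∑ j, Emat i j * ‖lamhalf j s - avgh s‖^2) :=
          Finset.sum_le_sum fun i _ => hper i
      _ = ∑ j, 4*ρ*((∑ i, Emat i j) * ‖lamhalf j s - avgh s‖^2) := by
          rw [Finset.sum_congr rfl fun i (_ : i ∈ Finset.univ) => (by
            rw [Finset.mul_sum, Finset.mul_sum]
            exact Finset.sum_congr rfl fun j _ => by ring :
            ρ * (4 * ∑ j, Emat i j * ‖lamhalf j s - avgh s‖^2)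
              = ∑ j, 4*ρ*(Emat i j * ‖lamhalf j s - avgh s‖^2))]
          rw [Finset.sum_comm]
          refine Finset.sum_congr rfl fun j _ => ?_
          rw [Finset.sum_congr rfl fun i (_ : i ∈ Finset.univ) =>
            (by ring : 4*ρ*(Emat i j * ‖lamhalf j s - avgh s‖^2)
              = (4*ρ*‖lamhalf j s - avgh s‖^2) * Emat i j)]
          rw [← Finset.mul_sum]
          ring
      _ ≤ ∑ j, 4*ρ*((H:ℝ) * ‖lamhalf j s - avgh s‖^2) := by
          refine Finset.sum_le_sum fun j _ => ?_
          have h4ρ : (0:ℝ) ≤ 4*ρ := by linarith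
          apply mul_le_mul_of_nonneg_left _ h4ρ
          exact mul_le_mul_of_nonneg_right (hcol_le j) (sq_nonneg _)
      _ = 4*(ρ*(H:ℝ)) * ‖Fh s‖^2 := by
          rw [hFhnorm, Finset.mul_sum]
          exact Finset.sum_congr rfl fun j _ => by ring
  -- average after one step
  have havg1 : ∀ s, avg (s+1) = (H:ℝ)⁻¹ • ∑ i, mm s i + (H:ℝ)⁻¹ • ∑ i, dd s i := by
    intro s
    show (H:ℝ)⁻¹ • ∑ i, lam i (s+1) = _
    rw [show ∑ i, lam i (s+1) = ∑ i, (mm s i + dd s i) from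
      Finset.sum_congr rfl fun i _ => by rw [hdd_apply]; abel]
    rw [Finset.sum_add_distrib, smul_add]
  -- the mixing contraction step
  have hFm_step : ∀ s, ‖Fm (s+1)‖ ≤ (Real.sqrt κ + 2*Real.sqrt (ρ*(H:ℝ))) * ‖Fh s‖ := by
    intro s
    have hsplit : Fm (s+1) = mk (fun i => mm s i - (H:ℝ)⁻¹ • ∑ k, mm s k)
        + mk (fun i => dd s i - (H:ℝ)⁻¹ • ∑ k, dd s k) := by
      show mk _ = _
      have e : mk (fun i => mm s i - (H:ℝ)⁻¹ • ∑ k, mm s k)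
            + mk (fun i => dd s i - (H:ℝ)⁻¹ • ∑ k, dd s k)
          = mk (fun i => (mm s i - (H:ℝ)⁻¹ • ∑ k, mm s k)
            + (dd s i - (H:ℝ)⁻¹ • ∑ k, dd s k)) := rfl
      rw [e]
      apply congrArg mk
      funext i
      rw [havg1 s]
      have e2 : lam i (s+1) = mm s i + dd s i := by rw [hdd_apply]; abel
      rw [e2]
      abel
    have hmixid : ∀ i, mm s i - (H:ℝ)⁻¹ • ∑ k, mm s k
        = ∑ j, Amat i j • (lamhalf j s - avgh s) := by
      intro i
      have e1 : ∀ j, Amat i j • (lamhalf j s - avgh s)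
          = (Emat i j • lamhalf j s - Emat i j • avgh s)
            - (((H:ℝ)⁻¹ * ∑ k, Emat k j) • lamhalf j s
              - ((H:ℝ)⁻¹ * ∑ k, Emat k j) • avgh s) := by
        intro j
        rw [hAmat_apply, sub_smul, smul_sub, smul_sub]
      rw [Finset.sum_congr rfl fun j (_ : j ∈ Finset.univ) => e1 j]
      rw [Finset.sum_sub_distrib, Finset.sum_sub_distrib, Finset.sum_sub_distrib]
      have e2 : ∑ j, Emat i j • avgh s = avgh s := by
        rw [← Finset.sum_smul, hErow i, one_smul]
      have e3 : ∑ j, ((H:ℝ)⁻¹ * ∑ k, Emat k j) • lamhalf j s = (H:ℝ)⁻¹ • ∑ k, mm s k := by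
        rw [hmmsum, Finset.smul_sum]
        exact Finset.sum_congr rfl fun j _ => (mul_smul _ _ _)
      have e4 : ∑ j, ((H:ℝ)⁻¹ * ∑ k, Emat k j) • avgh s = avgh s := by
        rw [← Finset.sum_smul, ← Finset.mul_sum, hcol_tot, inv_mul_cancel₀ hHne, one_smul]
      rw [e2, e3, e4, hmm_apply]
      abel
    have hmixbd : ‖mk (fun i => mm s i - (H:ℝ)⁻¹ • ∑ k, mm s k)‖
        ≤ Real.sqrt κ * ‖Fh s‖ := by
      apply bd_sq_le_of (norm_nonneg _) (norm_nonneg _) hκ0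
      rw [hWnorm, hFhnorm]
      calc ∑ i, ‖mm s i - (H:ℝ)⁻¹ • ∑ k, mm s k‖^2
          = ∑ i, ‖∑ j, Amat i j • (lamhalf j s - avgh s)‖^2 :=
            Finset.sum_congr rfl fun i _ => by rw [hmixid i]
        _ ≤ ‖LinearMap.toContinuousLinearMap (Matrix.toEuclideanLin Amat)‖^2
            * ∑ j, ‖lamhalf j s - avgh s‖^2 := bd_opnorm _ _
        _ = κ * ∑ j, ‖lamhalf j s - avgh s‖^2 := by rw [← hκ]
    have hddev : ‖mk (fun i => dd s i - (H:ℝ)⁻¹ • ∑ k, dd s k)‖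
        ≤ (2*Real.sqrt (ρ*(H:ℝ))) * ‖Fh s‖ := by
      have h1 : ‖mk (fun i => dd s i - (H:ℝ)⁻¹ • ∑ k, dd s k)‖^2 ≤ ∑ i, ‖dd s i‖^2 := by
        rw [hWnorm]
        exact bd_variance (dd s) _ (by rw [smul_inv_smul₀ hHne])
      have h2 : ‖mk (fun i => dd s i - (H:ℝ)⁻¹ • ∑ k, dd s k)‖^2
          ≤ (4*(ρ*(H:ℝ))) * ‖Fh s‖^2 := h1.trans (hddsq s)
      have h3 := bd_sq_le_of (norm_nonneg _) (norm_nonneg _)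
        (by positivity : (0:ℝ) ≤ 4*(ρ*(H:ℝ))) h2
      have h4 : Real.sqrt (4*(ρ*(H:ℝ))) = 2*Real.sqrt (ρ*(H:ℝ)) := by
        rw [show (4:ℝ)*(ρ*(H:ℝ)) = 2^2*(ρ*(H:ℝ)) by norm_num,
          Real.sqrt_mul (by positivity), Real.sqrt_sq (by norm_num)]
      rwa [h4] at h3
    calc ‖Fm (s+1)‖ ≤ ‖mk (fun i => mm s i - (H:ℝ)⁻¹ • ∑ k, mm s k)‖
          + ‖mk (fun i => dd s i - (H:ℝ)⁻¹ • ∑ k, dd s k)‖ := by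
          rw [hsplit]; exact norm_add_le _ _
      _ ≤ (Real.sqrt κ + 2*Real.sqrt (ρ*(H:ℝ))) * ‖Fh s‖ := by
          rw [add_mul]
          exact add_le_add hmixbd hddev
  -- the drift term r
  set rr : ℕ → EuclideanSpace ℝ (Fin d) :=
    fun s => avg (s+1) - (1-β*θ) • avg s - (β/(M:ℝ)) • Gs s with hrrdef
  have hrr_apply : ∀ s, rr s = avg (s+1) - (1-β*θ) • avg s - (β/(M:ℝ)) • Gs s :=
    fun s => rfl
  have hsqH : Real.sqrt (H:ℝ) * Real.sqrt (H:ℝ) = (H:ℝ) :=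
    Real.mul_self_sqrt (le_of_lt hH0)
  have hsqHne : Real.sqrt (H:ℝ) ≠ 0 := by
    intro h0
    rw [h0, mul_zero] at hsqH
    exact hHne hsqH.symm
  have hrr_le : ∀ s, ‖rr s‖
      ≤ (2*Real.sqrt ρ + Real.sqrt χ / Real.sqrt (H:ℝ)) * ‖Fh s‖ := by
    intro s
    -- identity for rr
    have hid : rr s = ((H:ℝ)⁻¹ • ∑ i, dd s i)
        + (H:ℝ)⁻¹ • ∑ j, ((∑ i, Emat i j) - 1) • (lamhalf j s - avgh s) := by
      have e0 : ∑ j, ((∑ i, Emat i j) - 1) • (lamhalf j s - avgh s)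
          = (∑ i, mm s i) - ∑ j, lamhalf j s := by
        have e1 : ∀ j, ((∑ i, Emat i j) - 1) • (lamhalf j s - avgh s)
            = ((∑ i, Emat i j) • lamhalf j s - lamhalf j s)
              - (((∑ i, Emat i j) - 1) • avgh s) := by
          intro j
          rw [smul_sub, sub_smul, one_smul]
        rw [Finset.sum_congr rfl fun j (_ : j ∈ Finset.univ) => e1 j]
        rw [Finset.sum_sub_distrib, Finset.sum_sub_distrib]
        rw [← Finset.sum_smul]
        rw [show ∑ j, ((∑ i, Emat i j) - 1) = (0:ℝ) by
          rw [Finset.sum_sub_distrib, hcol_tot]; simp]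
        rw [zero_smul, sub_zero, ← hmmsum]
      rw [hrr_apply, havg1 s, e0, smul_sub]
      rw [show (H:ℝ)⁻¹ • ∑ j, lamhalf j s = avgh s from rfl, havgh s]
      abel
    rw [hid]
    have hbd1 : ‖(H:ℝ)⁻¹ • ∑ i, dd s i‖ ≤ 2*Real.sqrt ρ * ‖Fh s‖ := by
      rw [norm_smul, Real.norm_eq_abs, abs_of_pos (by positivity : (0:ℝ) < (H:ℝ)⁻¹)]
      have h1 : ‖∑ i, dd s i‖ ≤ Real.sqrt (∑ _i : Fin H, (1:ℝ)^2) * Real.sqrt (∑ i, ‖dd s i‖^2) := by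
        have := bd_cs_sum (fun _ : Fin H => (1:ℝ)) (dd s)
        simpa using this
      have h2 : Real.sqrt (∑ _i : Fin H, (1:ℝ)^2) = Real.sqrt (H:ℝ) := by
        congr 1
        simp
      have h3 : Real.sqrt (∑ i, ‖dd s i‖^2) ≤ Real.sqrt (4*(ρ*(H:ℝ))) * ‖Fh s‖ := by
        have := hddsq s
        calc Real.sqrt (∑ i, ‖dd s i‖^2) ≤ Real.sqrt (4*(ρ*(H:ℝ)) * ‖Fh s‖^2) :=
              Real.sqrt_le_sqrt this
          _ = Real.sqrt (4*(ρ*(H:ℝ))) * ‖Fh s‖ := by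
              rw [Real.sqrt_mul (by positivity), Real.sqrt_sq (norm_nonneg _)]
      have h4 : Real.sqrt (4*(ρ*(H:ℝ))) = 2*(Real.sqrt ρ * Real.sqrt (H:ℝ)) := by
        rw [show (4:ℝ)*(ρ*(H:ℝ)) = 2^2*(ρ*(H:ℝ)) by norm_num,
          Real.sqrt_mul (by positivity), Real.sqrt_sq (by norm_num),
          Real.sqrt_mul hρ]
      calc (H:ℝ)⁻¹ * ‖∑ i, dd s i‖
          ≤ (H:ℝ)⁻¹ * (Real.sqrt (H:ℝ) * (Real.sqrt (4*(ρ*(H:ℝ))) * ‖Fh s‖)) := by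
            apply mul_le_mul_of_nonneg_left _ (by positivity)
            calc ‖∑ i, dd s i‖ ≤ Real.sqrt (∑ _i : Fin H, (1:ℝ)^2) * Real.sqrt (∑ i, ‖dd s i‖^2) := h1
              _ = Real.sqrt (H:ℝ) * Real.sqrt (∑ i, ‖dd s i‖^2) := by rw [h2]
              _ ≤ Real.sqrt (H:ℝ) * (Real.sqrt (4*(ρ*(H:ℝ))) * ‖Fh s‖) :=
                  mul_le_mul_of_nonneg_left h3 (Real.sqrt_nonneg _)
        _ = 2*Real.sqrt ρ * ‖Fh s‖ := by
            rw [h4]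
            rw [show (H:ℝ)⁻¹ * (Real.sqrt (H:ℝ) * (2*(Real.sqrt ρ * Real.sqrt (H:ℝ)) * ‖Fh s‖))
              = 2*Real.sqrt ρ * ‖Fh s‖ * ((Real.sqrt (H:ℝ) * Real.sqrt (H:ℝ)) * (H:ℝ)⁻¹) by ring,
              hsqH, mul_inv_cancel₀ hHne, mul_one]
    have hbd2 : ‖(H:ℝ)⁻¹ • ∑ j, ((∑ i, Emat i j) - 1) • (lamhalf j s - avgh s)‖
        ≤ (Real.sqrt χ / Real.sqrt (H:ℝ)) * ‖Fh s‖ := by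
      rw [norm_smul, Real.norm_eq_abs, abs_of_pos (by positivity : (0:ℝ) < (H:ℝ)⁻¹)]
      have h1 := bd_cs_sum (fun j => (∑ i, Emat i j) - 1) (fun j => lamhalf j s - avgh s)
      have h2 : ∑ j, ((∑ i, Emat i j) - 1)^2 = (H:ℝ) * χ := by
        rw [hχ, ← mul_assoc, mul_inv_cancel₀ hHne, one_mul]
      have h3 : Real.sqrt (∑ j, ‖lamhalf j s - avgh s‖^2) = ‖Fh s‖ := by
        rw [← hFhnorm, Real.sqrt_sq (norm_nonneg _)]
      rw [h2, h3] at h1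
      calc (H:ℝ)⁻¹ * ‖∑ j, ((∑ i, Emat i j) - 1) • (lamhalf j s - avgh s)‖
          ≤ (H:ℝ)⁻¹ * (Real.sqrt ((H:ℝ)*χ) * ‖Fh s‖) := by
            apply mul_le_mul_of_nonneg_left h1 (by positivity)
        _ = (Real.sqrt χ / Real.sqrt (H:ℝ)) * ‖Fh s‖ := by
            rw [Real.sqrt_mul (le_of_lt hH0)]
            rw [show (H:ℝ)⁻¹ * (Real.sqrt (H:ℝ) * Real.sqrt χ * ‖Fh s‖)
              = (Real.sqrt χ * ‖Fh s‖) * (Real.sqrt (H:ℝ) * (H:ℝ)⁻¹) by ring]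
            rw [show Real.sqrt (H:ℝ) * (H:ℝ)⁻¹ = (Real.sqrt (H:ℝ))⁻¹ by
              rw [show ((H:ℝ))⁻¹ = (Real.sqrt (H:ℝ) * Real.sqrt (H:ℝ))⁻¹ by rw [hsqH],
                mul_inv, ← mul_assoc, mul_inv_cancel₀ hsqHne, one_mul]]
            rw [div_eq_mul_inv]
            ring
    calc ‖((H:ℝ)⁻¹ • ∑ i, dd s i)
          + (H:ℝ)⁻¹ • ∑ j, ((∑ i, Emat i j) - 1) • (lamhalf j s - avgh s)‖
        ≤ ‖(H:ℝ)⁻¹ • ∑ i, dd s i‖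
          + ‖(H:ℝ)⁻¹ • ∑ j, ((∑ i, Emat i j) - 1) • (lamhalf j s - avgh s)‖ :=
          norm_add_le _ _
      _ ≤ (2*Real.sqrt ρ + Real.sqrt χ / Real.sqrt (H:ℝ)) * ‖Fh s‖ := by
          rw [add_mul]
          exact add_le_add hbd1 hbd2
  -- contraction factor
  have hγle : Real.sqrt κ + 2*Real.sqrt (ρ*(H:ℝ)) ≤ 1 - ε/2 := by
    have h1 : Real.sqrt κ ≤ (1+κ)/2 := by
      linarith only [sq_nonneg (Real.sqrt κ - 1), Real.sq_sqrt hκ0]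
    have h2 : 8 * Real.sqrt (ρ*(H:ℝ)) = 1 - κ - ε := by rw [hε]; ring
    have h3 : κ ≤ 1 - ε := by
      rw [hε]
      linarith [hsqrtρH]
    linarith
  have hγ0 : 0 ≤ Real.sqrt κ + 2*Real.sqrt (ρ*(H:ℝ)) := by positivity
  -- induction bound on deviations
  have hFm_bound : ∀ s, ‖Fm s‖ ≤ (2/ε - 1) * X := by
    intro s
    induction s with
    | zero =>
        have hz : Fm 0 = 0 := by
          show mk _ = 0
          have e : (fun i => lam i 0 - avg 0) = fun _ : Fin H => (0 : EuclideanSpace ℝ (Fin d)) := by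
            funext i
            have : avg 0 = 0 := by
              show (H:ℝ)⁻¹ • ∑ i, lam i 0 = 0
              rw [Finset.sum_congr rfl fun i _ => hlam0 i]
              simp
            rw [hlam0 i, this, sub_zero]
          rw [e]
          rfl
        rw [hz, norm_zero]
        have h1 : (1:ℝ) ≤ 2/ε := by
          rw [le_div_iff₀ hε0]
          linarith
        have h2 : 0 ≤ 2/ε - 1 := by linarith
        positivity
    | succ n ih =>
        have h1 : ‖Fm (n+1)‖ ≤ (Real.sqrt κ + 2*Real.sqrt (ρ*(H:ℝ))) * ‖Fh n‖ := hFm_step n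
        have h2 : ‖Fh n‖ ≤ (1-β*θ)*‖Fm n‖ + X := hFh_le n
        have h3 : ‖Fh n‖ ≤ (2/ε - 1)*X + X := by
          calc ‖Fh n‖ ≤ (1-β*θ)*‖Fm n‖ + X := h2
            _ ≤ 1*‖Fm n‖ + X :=
                add_le_add_left (mul_le_mul_of_nonneg_right
                  (by linarith : (1-β*θ) ≤ 1) (norm_nonneg _)) X
            _ ≤ (2/ε - 1)*X + X := by
                rw [one_mul]
                exact add_le_add_left ih X
        have h4 : (2/ε - 1)*X + X = (2/ε)*X := by ring
        rw [h4] at h3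
        calc ‖Fm (n+1)‖ ≤ (Real.sqrt κ + 2*Real.sqrt (ρ*(H:ℝ))) * ‖Fh n‖ := h1
          _ ≤ (1 - ε/2) * ((2/ε)*X) := by
              apply mul_le_mul hγle h3 (norm_nonneg _) (by linarith)
          _ = (2/ε - 1)*X := by
              field_simp
  have hFh_bound : ∀ s, ‖Fh s‖ ≤ (2/ε) * X := by
    intro s
    calc ‖Fh s‖ ≤ (1-β*θ)*‖Fm s‖ + X := hFh_le s
      _ ≤ 1*‖Fm s‖ + X :=
          add_le_add_left (mul_le_mul_of_nonneg_right
            (by linarith : (1-β*θ) ≤ 1) (norm_nonneg _)) X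
      _ ≤ (2/ε - 1)*X + X := by
          rw [one_mul]
          exact add_le_add_left (hFm_bound s) X
      _ = (2/ε)*X := by ring
  -- squared bound on rr
  have hrr_sq : ∀ s, ‖rr s‖^2
      ≤ 8*(4*ρ*(H:ℝ)+χ) * (β^2*(H:ℝ)^2*ψ^2) / ((M:ℝ)^2*ε^2) := by
    intro s
    have h1 : ‖rr s‖ ≤ (2*Real.sqrt ρ + Real.sqrt χ / Real.sqrt (H:ℝ)) * ((2/ε)*X) := by
      calc ‖rr s‖ ≤ (2*Real.sqrt ρ + Real.sqrt χ / Real.sqrt (H:ℝ)) * ‖Fh s‖ := hrr_le s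
        _ ≤ (2*Real.sqrt ρ + Real.sqrt χ / Real.sqrt (H:ℝ)) * ((2/ε)*X) := by
            apply mul_le_mul_of_nonneg_left (hFh_bound s) (by positivity)
    have h2 : ‖rr s‖^2 ≤ ((2*Real.sqrt ρ + Real.sqrt χ / Real.sqrt (H:ℝ)) * ((2/ε)*X))^2 :=
      pow_le_pow_left₀ (norm_nonneg _) h1 2
    refine h2.trans ?_
    have hρs : (Real.sqrt ρ)^2 = ρ := Real.sq_sqrt hρ
    have hχs : (Real.sqrt χ)^2 = χ := Real.sq_sqrt hχ0
    have hHs : (Real.sqrt (H:ℝ))^2 = (H:ℝ) := Real.sq_sqrt (le_of_lt hH0)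
    have hcoef : (2*Real.sqrt ρ + Real.sqrt χ / Real.sqrt (H:ℝ))^2 ≤ 2*(4*ρ + χ/(H:ℝ)) := by
      have hexp : (2*Real.sqrt ρ + Real.sqrt χ / Real.sqrt (H:ℝ))^2
          = 4*ρ + 4*(Real.sqrt ρ * (Real.sqrt χ / Real.sqrt (H:ℝ)))
            + χ/(H:ℝ) := by
        have e1 : (Real.sqrt χ / Real.sqrt (H:ℝ))^2 = χ/(H:ℝ) := by
          rw [div_pow, hχs, hHs]
        calc (2*Real.sqrt ρ + Real.sqrt χ / Real.sqrt (H:ℝ))^2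
            = 4*(Real.sqrt ρ)^2 + 4*(Real.sqrt ρ * (Real.sqrt χ / Real.sqrt (H:ℝ)))
              + (Real.sqrt χ / Real.sqrt (H:ℝ))^2 := by ring
          _ = _ := by rw [hρs, e1]
      rw [hexp]
      have hyoung : 4*(Real.sqrt ρ * (Real.sqrt χ / Real.sqrt (H:ℝ))) ≤ 4*ρ + χ/(H:ℝ) := by
        have h := sq_nonneg (2*Real.sqrt ρ - Real.sqrt χ / Real.sqrt (H:ℝ))
        have e1 : (Real.sqrt χ / Real.sqrt (H:ℝ))^2 = χ/(H:ℝ) := by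
          rw [div_pow, hχs, hHs]
        linarith only [h, hρs, e1]
      linarith
    have hX2 : X^2 = β^2*(H:ℝ)^3*ψ^2/(M:ℝ)^2 := by
      rw [hXdef]
      rw [show (β * (H:ℝ) / (M:ℝ) * (Real.sqrt (H:ℝ) * ψ))^2
        = β^2*(H:ℝ)^2*ψ^2/(M:ℝ)^2 * (Real.sqrt (H:ℝ))^2 by ring, hHs]
      ring
    have hfinal : (2*(4*ρ + χ/(H:ℝ))) * ((2/ε)*X)^2
        = 8*(4*ρ*(H:ℝ)+χ) * (β^2*(H:ℝ)^2*ψ^2) / ((M:ℝ)^2*ε^2) := by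
      rw [show ((2/ε)*X)^2 = (4/ε^2)*X^2 by ring, hX2]
      field_simp
      ring
    calc ((2*Real.sqrt ρ + Real.sqrt χ / Real.sqrt (H:ℝ)) * ((2/ε)*X))^2
        = (2*Real.sqrt ρ + Real.sqrt χ / Real.sqrt (H:ℝ))^2 * ((2/ε)*X)^2 := by ring
      _ ≤ (2*(4*ρ + χ/(H:ℝ))) * ((2/ε)*X)^2 := by
          apply mul_le_mul_of_nonneg_right hcoef (by positivity)
      _ = _ := hfinal
  -- ===== FINAL ASSEMBLY =====
  have havgB : ‖avg t‖ ≤ B := by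
    show ‖(H:ℝ)⁻¹ • ∑ i, lam i t‖ ≤ B
    rw [norm_smul, Real.norm_eq_abs, abs_of_pos (by positivity : (0:ℝ) < (H:ℝ)⁻¹)]
    calc (H:ℝ)⁻¹ * ‖∑ i, lam i t‖ ≤ (H:ℝ)⁻¹ * ((H:ℝ) * B) := by
          apply mul_le_mul_of_nonneg_left _ (by positivity)
          calc ‖∑ i, lam i t‖ ≤ ∑ i, ‖lam i t‖ := norm_sum_le _ _
            _ ≤ ∑ _i : Fin H, B := Finset.sum_le_sum fun i _ => hlamB t i
            _ = (H:ℝ) * B := by simp [mul_comm]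
      _ = B := by field_simp
  set Gp : EuclideanSpace ℝ (Fin d) := (M:ℝ)⁻¹ • Gs t with hGpdef
  have hGpB : ‖Gp‖ ≤ (H:ℝ)*ψ/(M:ℝ) := by
    show ‖(M:ℝ)⁻¹ • Gs t‖ ≤ _
    rw [norm_smul, Real.norm_eq_abs, abs_of_pos (by positivity : (0:ℝ) < (M:ℝ)⁻¹)]
    calc (M:ℝ)⁻¹ * ‖Gs t‖ ≤ (M:ℝ)⁻¹ * ((H:ℝ)*ψ) := by
          apply mul_le_mul_of_nonneg_left _ (by positivity)
          calc ‖Gs t‖ ≤ ∑ i, ‖g i t‖ := norm_sum_le _ _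
            _ ≤ ∑ _i : Fin H, ψ := Finset.sum_le_sum fun i _ => hg i t
            _ = (H:ℝ)*ψ := by simp [mul_comm]
      _ = (H:ℝ)*ψ/(M:ℝ) := by ring
  have haB : θ * ‖avg t‖ ≤ (H:ℝ)*ψ/(M:ℝ) := by
    calc θ * ‖avg t‖ ≤ θ * B := mul_le_mul_of_nonneg_left havgB (le_of_lt hθ)
      _ = (H:ℝ)*ψ/(M:ℝ) := by rw [hBdef]; field_simp
  have hcore := bd_core β θ ((H:ℝ)*ψ/(M:ℝ)) hβ hθ (by positivity) hβθ hβθ0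
    (avg t) Gp lamv haB hGpB
  have hPr : avg (t+1) - lamv = ((1-β*θ)•(avg t) + β•Gp - lamv) + rr t := by
    rw [hrr_apply t]
    rw [show β•Gp = (β/(M:ℝ)) • Gs t by
      rw [hGpdef, smul_smul, ← div_eq_mul_inv]]
    abel
  have hyoung := bd_young ((1-β*θ)•(avg t) + β•Gp - lamv) (rr t)
    (show (0:ℝ) < (β*θ)/(2*(1-β*θ)) by positivity)
  rw [← hPr] at hyoung
  have hτ1 : 1 + (β*θ)/(2*(1-β*θ)) = (2-β*θ)/(2*(1-β*θ)) := by
    field_simp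
    ring
  have hτ2 : 1 + 1/((β*θ)/(2*(1-β*θ))) = (2-β*θ)/(β*θ) := by
    rw [one_div_div]
    field_simp
    ring
  rw [hτ1, hτ2] at hyoung
  -- scalar abbreviations
  have hA1 : 0 ≤ (1-β*θ)/(2*β) * (H:ℝ) := by positivity
  have stepA : ((1-β*θ)/(2*β)) * ((H:ℝ)*‖avg (t+1) - lamv‖^2 - (H:ℝ)*‖avg t - lamv‖^2)
      ≤ (H:ℝ) * ((2-β*θ)/(4*β)*‖(1-β*θ)•(avg t) + β•Gp - lamv‖^2
          - ((1-β*θ)/(2*β))*‖avg t - lamv‖^2)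
        + ((H:ℝ)*(1-β*θ)*(2-β*θ)/(2*β^2*θ))*‖rr t‖^2 := by
    have h1 : ((1-β*θ)/(2*β)) * ((H:ℝ)*‖avg (t+1) - lamv‖^2 - (H:ℝ)*‖avg t - lamv‖^2)
        ≤ ((1-β*θ)/(2*β)) * ((H:ℝ)*((2-β*θ)/(2*(1-β*θ))*‖(1-β*θ)•(avg t) + β•Gp - lamv‖^2
            + (2-β*θ)/(β*θ)*‖rr t‖^2) - (H:ℝ)*‖avg t - lamv‖^2) := by
      apply mul_le_mul_of_nonneg_left _ (by positivity)
      have h2 : (H:ℝ)*‖avg (t+1) - lamv‖^2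
          ≤ (H:ℝ)*((2-β*θ)/(2*(1-β*θ))*‖(1-β*θ)•(avg t) + β•Gp - lamv‖^2
            + (2-β*θ)/(β*θ)*‖rr t‖^2) :=
        mul_le_mul_of_nonneg_left hyoung (by positivity)
      linarith only [h2]
    refine h1.trans (le_of_eq ?_)
    field_simp
    ring
  have stepC : (2-β*θ)/(4*β)*‖(1-β*θ)•(avg t) + β•Gp - lamv‖^2
      - ((1-β*θ)/(2*β))*‖avg t - lamv‖^2
      ≤ ⟪avg t - lamv, Gp⟫ + (θ/2)*‖lamv‖^2 + 2*β*((H:ℝ)*ψ/(M:ℝ))^2 := by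
    have e : ⟪avg t - lamv, Gp⟫ + (θ/2)*‖lamv‖^2 + 2*β*((H:ℝ)*ψ/(M:ℝ))^2
        - ((2-β*θ)/(4*β)*‖(1-β*θ)•(avg t) + β•Gp - lamv‖^2
          - ((1-β*θ)/(2*β))*‖avg t - lamv‖^2)
        = (8*β^2*((H:ℝ)*ψ/(M:ℝ))^2
            - ((1+(1-β*θ)) * ‖(1-β*θ)•(avg t) + β•Gp - lamv‖^2
              - 2*(1-β*θ)*‖avg t - lamv‖^2
              - 4*β*⟪avg t - lamv, Gp⟫ - 2*(β*θ)*‖lamv‖^2))/(4*β) := by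
      field_simp
      ring
    have h1 : 0 ≤ ⟪avg t - lamv, Gp⟫ + (θ/2)*‖lamv‖^2 + 2*β*((H:ℝ)*ψ/(M:ℝ))^2
        - ((2-β*θ)/(4*β)*‖(1-β*θ)•(avg t) + β•Gp - lamv‖^2
          - ((1-β*θ)/(2*β))*‖avg t - lamv‖^2) := by
      rw [e]
      apply div_nonneg _ (by positivity)
      linarith only [hcore]
    linarith only [h1]
  have stepD : ((H:ℝ)*(1-β*θ)*(2-β*θ)/(2*β^2*θ))*‖rr t‖^2
      ≤ (1 + 1 / ε ^ 3) * (4 * ρ * (H : ℝ) + χ)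
          * (8 * (H : ℝ) ^ 3 * ψ ^ 2) / ((M : ℝ) ^ 2 * θ) := by
    have hq2 : (1-β*θ)*(2-β*θ) ≤ 2 := by
      have h := mul_nonneg (le_of_lt hβθ0) (show (0:ℝ) ≤ 3 - β*θ by linarith)
      linarith only [h]
    have hK0 : 0 ≤ (H:ℝ)*(1-β*θ)*(2-β*θ)/(2*β^2*θ) := by
      apply div_nonneg _ (by positivity)
      apply mul_nonneg (mul_nonneg (le_of_lt hH0) (by linarith)) (by linarith)
    have h1 : ((H:ℝ)*(1-β*θ)*(2-β*θ)/(2*β^2*θ))*‖rr t‖^2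
        ≤ ((H:ℝ)*(1-β*θ)*(2-β*θ)/(2*β^2*θ))
          * (8*(4*ρ*(H:ℝ)+χ) * (β^2*(H:ℝ)^2*ψ^2) / ((M:ℝ)^2*ε^2)) :=
      mul_le_mul_of_nonneg_left (hrr_sq t) hK0
    refine h1.trans ?_
    have e1 : ((H:ℝ)*(1-β*θ)*(2-β*θ)/(2*β^2*θ))
          * (8*(4*ρ*(H:ℝ)+χ) * (β^2*(H:ℝ)^2*ψ^2) / ((M:ℝ)^2*ε^2))
        = ((1-β*θ)*(2-β*θ)) * (4*(4*ρ*(H:ℝ)+χ) * ((H:ℝ)^3*ψ^2) / ((M:ℝ)^2*θ*ε^2)) := by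
      field_simp
      ring
    rw [e1]
    have h2 : ((1-β*θ)*(2-β*θ)) * (4*(4*ρ*(H:ℝ)+χ) * ((H:ℝ)^3*ψ^2) / ((M:ℝ)^2*θ*ε^2))
        ≤ 2 * (4*(4*ρ*(H:ℝ)+χ) * ((H:ℝ)^3*ψ^2) / ((M:ℝ)^2*θ*ε^2)) := by
      apply mul_le_mul_of_nonneg_right hq2 (by positivity)
    refine h2.trans ?_
    have hS0 : (0:ℝ) ≤ 4*ρ*(H:ℝ)+χ := by positivity
    have hε32 : ε^3 ≤ ε^2 := pow_le_pow_of_le_one (le_of_lt hε0) hε1 (by norm_num)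
    have h3 : (1:ℝ)/ε^2 ≤ 1/ε^3 :=
      one_div_le_one_div_of_le (by positivity) hε32
    have e2 : 2 * (4*(4*ρ*(H:ℝ)+χ) * ((H:ℝ)^3*ψ^2) / ((M:ℝ)^2*θ*ε^2))
        = (1/ε^2) * ((4*ρ*(H:ℝ)+χ) * (8*(H:ℝ)^3*ψ^2) / ((M:ℝ)^2*θ)) := by
      field_simp
      ring
    have e3 : (1 + 1 / ε ^ 3) * (4 * ρ * (H : ℝ) + χ)
          * (8 * (H : ℝ) ^ 3 * ψ ^ 2) / ((M : ℝ) ^ 2 * θ)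
        = (1 + 1/ε^3) * ((4*ρ*(H:ℝ)+χ) * (8*(H:ℝ)^3*ψ^2) / ((M:ℝ)^2*θ)) := by
      ring
    rw [e2, e3]
    apply mul_le_mul_of_nonneg_right _ (by positivity)
    have h4 : (1:ℝ)/ε^3 ≤ 1 + 1/ε^3 := by linarith
    linarith only [h3, h4]
  have stepE : (H:ℝ) * (2*β*((H:ℝ)*ψ/(M:ℝ))^2)
      ≤ (H : ℝ) ^ 3 * ψ ^ 2 * β / (M : ℝ) ^ 2 + ψ ^ 2 * (H : ℝ) * β := by
    have hH2M2 : (H:ℝ)^2 ≤ (M:ℝ)^2 := by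
      apply pow_le_pow_left₀ (le_of_lt hH0) hHM'
    have e1 : (H:ℝ) * (2*β*((H:ℝ)*ψ/(M:ℝ))^2) = 2*((H:ℝ)^3*ψ^2*β/(M:ℝ)^2) := by
      field_simp
    rw [e1]
    have h1 : (H:ℝ)^3*ψ^2*β/(M:ℝ)^2 ≤ ψ^2*(H:ℝ)*β := by
      rw [div_le_iff₀ (by positivity)]
      have h2 : (H:ℝ)^3*ψ^2*β = (ψ^2*(H:ℝ)*β) * (H:ℝ)^2 := by ring
      rw [h2]
      apply mul_le_mul_of_nonneg_left hH2M2 (by positivity)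
    linarith only [h1]
  -- identify the inner-product sums
  have hips1 : ∑ i, ⟪avg t, g i t⟫ = ⟪avg t, Gs t⟫ := by
    rw [show Gs t = ∑ i, g i t from rfl, inner_sum]
  have hips2 : ∑ i, ⟪lamv, g i t⟫ = ⟪lamv, Gs t⟫ := by
    rw [show Gs t = ∑ i, g i t from rfl, inner_sum]
  have hIP : (H:ℝ) * ⟪avg t - lamv, Gp⟫
      = ((H:ℝ)/(M:ℝ)) * (∑ i, ⟪avg t, g i t⟫) - ((H:ℝ)/(M:ℝ)) * (∑ i, ⟪lamv, g i t⟫) := by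
    rw [hips1, hips2, hGpdef, real_inner_smul_right, inner_sub_left]
    field_simp
  -- put everything together
  have final : ((1-β*θ)/(2*β)) * ((H:ℝ)*‖avg (t+1) - lamv‖^2 - (H:ℝ)*‖avg t - lamv‖^2)
      ≤ ((H : ℝ) / M) * ∑ i, ⟪avg t, g i t⟫
        - ((H : ℝ) / M) * ∑ i, ⟪lamv, g i t⟫
        + (θ * (H : ℝ) / 2) * ‖lamv‖ ^ 2
        + (H : ℝ) ^ 3 * ψ ^ 2 * β / (M : ℝ) ^ 2
        + ψ ^ 2 * (H : ℝ) * β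
        + (1 + 1 / ε ^ 3) * (4 * ρ * (H : ℝ) + χ)
            * (8 * (H : ℝ) ^ 3 * ψ ^ 2) / ((M : ℝ) ^ 2 * θ) := by
    have hC : (H:ℝ) * ((2-β*θ)/(4*β)*‖(1-β*θ)•(avg t) + β•Gp - lamv‖^2
          - ((1-β*θ)/(2*β))*‖avg t - lamv‖^2)
        ≤ (H:ℝ) * (⟪avg t - lamv, Gp⟫ + (θ/2)*‖lamv‖^2 + 2*β*((H:ℝ)*ψ/(M:ℝ))^2) :=
      mul_le_mul_of_nonneg_left stepC (by positivity)
    have e4 : (H:ℝ) * (⟪avg t - lamv, Gp⟫ + (θ/2)*‖lamv‖^2 + 2*β*((H:ℝ)*ψ/(M:ℝ))^2)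
        = (H:ℝ) * ⟪avg t - lamv, Gp⟫ + (θ*(H:ℝ)/2)*‖lamv‖^2
          + (H:ℝ) * (2*β*((H:ℝ)*ψ/(M:ℝ))^2) := by ring
    rw [e4, hIP] at hC
    linarith only [stepA, hC, stepD, stepE]
  exact final
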